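/- Fix b, c ∈ (0, π). Let I ⊆ (0, π) be an open interval and α, γ : I → (0, π) functions such that for every a ∈ I: cos a = cos b · cos c + sin b · sin c · cos(α(a)), and cos c = cos a · cos b + sin a · sin b · cos(γ(a)). Then α is differentiable on I with α′(a) = 1 / (sin b · sin(γ(a))) for every a ∈ I. -/

import Mathlib

open Real Set

/-- Spherical trigonometry: with the sides `b, c` fixed and the angles `α`, `γ`
determined by the cosine laws as functions of the side `a`, one has
`∂α/∂a = 1 / (sin b · sin γ)`. -/
theorem stmt_9 (b c : ℝ) (hb : b ∈ Ioo 0 π) (hc : c ∈ Ioo 0 π)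
    (lo hi : ℝ) (hI : Ioo lo hi ⊆ Ioo 0 π)
    (α γ : ℝ → ℝ)
    (hα : ∀ a ∈ Ioo lo hi, α a ∈ Ioo 0 π)
    (hγ : ∀ a ∈ Ioo lo hi, γ a ∈ Ioo 0 π)
    (law1 : ∀ a ∈ Ioo lo hi, cos a = cos b * cos c + sin b * sin c * cos (α a))
    (law2 : ∀ a ∈ Ioo lo hi, cos c = cos a * cos b + sin a * sin b * cos (γ a)) :
    ∀ a ∈ Ioo lo hi, HasDerivAt α (1 / (sin b * sin (γ a))) a := by
  intro a ha
  obtain ⟨ha0, haπ⟩ := hI ha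
  have hsb : 0 < sin b := sin_pos_of_pos_of_lt_pi hb.1 hb.2
  have hsc : 0 < sin c := sin_pos_of_pos_of_lt_pi hc.1 hc.2
  have hsa : 0 < sin a := sin_pos_of_pos_of_lt_pi ha0 haπ
  have hαa := hα a ha
  have hγa := hγ a ha
  have hsα : 0 < sin (α a) := sin_pos_of_pos_of_lt_pi hαa.1 hαa.2
  have hsγ : 0 < sin (γ a) := sin_pos_of_pos_of_lt_pi hγa.1 hγa.2
  have h1 := law1 a ha
  have h2 := law2 a ha
  have pa := sin_sq_add_cos_sq a
  have pb := sin_sq_add_cos_sq b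
  have pc := sin_sq_add_cos_sq c
  have pα := sin_sq_add_cos_sq (α a)
  have pγ := sin_sq_add_cos_sq (γ a)
  -- spherical law of sines
  have e1 : (sin b * sin c * sin (α a)) ^ 2
      = 1 - cos a ^ 2 - cos b ^ 2 - cos c ^ 2 + 2 * cos a * cos b * cos c := by
    linear_combination (sin b ^ 2 * sin c ^ 2) * pα
      + (sin b * sin c * cos (α a) + cos a - cos b * cos c) * h1
      + sin c ^ 2 * pb + (1 - cos b ^ 2) * pc
  have e2 : (sin a * sin b * sin (γ a)) ^ 2
      = 1 - cos a ^ 2 - cos b ^ 2 - cos c ^ 2 + 2 * cos a * cos b * cos c := by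
    linear_combination (sin a ^ 2 * sin b ^ 2) * pγ
      + (sin a * sin b * cos (γ a) + cos c - cos a * cos b) * h2
      + sin b ^ 2 * pa + (1 - cos a ^ 2) * pb
  have key : (sin c * sin (α a)) * (sin c * sin (α a))
      = (sin a * sin (γ a)) * (sin a * sin (γ a)) := by
    have hb2 : sin b ^ 2 ≠ 0 := by positivity
    have h : sin b ^ 2 * ((sin c * sin (α a)) * (sin c * sin (α a)))
        = sin b ^ 2 * ((sin a * sin (γ a)) * (sin a * sin (γ a))) := by
      linear_combination e1 - e2
    exact mul_left_cancel₀ hb2 h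
  have hsine : sin c * sin (α a) = sin a * sin (γ a) := by
    rcases mul_self_eq_mul_self_iff.mp key with h | h
    · exact h
    · nlinarith [mul_pos hsc hsα, mul_pos hsa hsγ]
  -- the arccos formula
  have hSpos : 0 < sin b * sin c := mul_pos hsb hsc
  have hcosα : (cos a - cos b * cos c) / (sin b * sin c) = cos (α a) := by
    field_simp
    linarith [h1]
  have hne1 : (cos a - cos b * cos c) / (sin b * sin c) ≠ 1 := by
    rw [hcosα]; intro h
    exact (pow_ne_zero 2 hsα.ne')
      (by linear_combination pα - (cos (α a) + 1) * h)
  have hnem1 : (cos a - cos b * cos c) / (sin b * sin c) ≠ -1 := by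
    rw [hcosα]; intro h
    exact (pow_ne_zero 2 hsα.ne')
      (by linear_combination pα + (1 - cos (α a)) * h)
  have hf : HasDerivAt (fun x : ℝ => (cos x - cos b * cos c) / (sin b * sin c))
      (-sin a / (sin b * sin c)) a :=
    ((Real.hasDerivAt_cos a).sub_const _).div_const _
  have hg : HasDerivAt (fun x : ℝ => arccos ((cos x - cos b * cos c) / (sin b * sin c)))
      (-(1 / √(1 - ((cos a - cos b * cos c) / (sin b * sin c)) ^ 2))
        * (-sin a / (sin b * sin c))) a :=
    by have := (Real.hasDerivAt_arccos hnem1 hne1).comp a hf; exact this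
  have hsqrt : √(1 - ((cos a - cos b * cos c) / (sin b * sin c)) ^ 2) = sin (α a) := by
    rw [hcosα, ← Real.sin_eq_sqrt_one_sub_cos_sq hαa.1.le hαa.2.le]
  rw [hsqrt] at hg
  have heq : (fun x : ℝ => arccos ((cos x - cos b * cos c) / (sin b * sin c))) =ᶠ[nhds a] α := by
    filter_upwards [isOpen_Ioo.mem_nhds ha] with x hx
    have hx1 := law1 x hx
    have hcx : (cos x - cos b * cos c) / (sin b * sin c) = cos (α x) := by
      field_simp
      linarith [hx1]
    rw [hcx, Real.arccos_cos (hα x hx).1.le (hα x hx).2.le]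
  have := hg.congr_of_eventuallyEq heq.symm
  convert this using 1
  case e'_4 => rfl
  case e'_5 => rfl
  have hαne : sin (α a) ≠ 0 := ne_of_gt hsα
  field_simp
  linear_combination hsine
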